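/- For every time T+1 ≤ t ≤ n, the centralized posterior does not depend on the strategy profile: if γ^{(K)} and γ̃^{(K)} are strategy profiles and δ is a shared history with P^{γ^{(K)}}(Δ_t^{(K)} = δ) > 0 and P^{γ̃^{(K)}}(Δ_t^{(K)} = δ) > 0, then P^{γ^{(K)}}(X_{t−T} = x | Δ_t^{(K)} = δ) = P^{γ̃^{(K)}}(X_{t−T} = x | Δ_t^{(K)} = δ) for every x ∈ X. -/

import Mathlib

open scoped Classical BigOperators

noncomputable section

/-! ### Finite-horizon decentralized POMDP with `T`-step delayed sharing.

Time is 0-indexed: `t : Fin n` corresponds to the paper's time `t+1`. -/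

/-- Trajectories: states, observations of each agent, actions of each agent. -/
abbrev Traj (n K : ℕ) (X : Type) (Y U : Fin K → Type) : Type :=
  (Fin n → X) × ((s : Fin n) → (j : Fin K) → Y j) × ((s : Fin n) → (j : Fin K) → U j)

/-- Time indices whose data has been shared by time `t` (delay `T`). -/
abbrev SharedIdx (n T : ℕ) (t : Fin n) : Type := {s : Fin n // s.val + T ≤ t.val}

/-- Time indices of the private observations at time `t`. -/
abbrev PrivYIdx (n T : ℕ) (t : Fin n) : Type :=
  {s : Fin n // t.val < s.val + T ∧ s.val ≤ t.val}

/-- Time indices of the private past actions at time `t`. -/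
abbrev PrivUIdx (n T : ℕ) (t : Fin n) : Type :=
  {s : Fin n // t.val < s.val + T ∧ s.val < t.val}

/-- The shared (common) information `Δ_t^{(K)}`. -/
abbrev SharedHist (n T : ℕ) {K : ℕ} (Y U : Fin K → Type) (t : Fin n) : Type :=
  (j : Fin K) → (SharedIdx n T t → Y j) × (SharedIdx n T t → U j)

/-- Agent `k`'s private information `Λ_t^k`. -/
abbrev PrivHist (n T : ℕ) {K : ℕ} (Y U : Fin K → Type) (t : Fin n) (k : Fin K) : Type :=
  (PrivYIdx n T t → Y k) × (PrivUIdx n T t → U k)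

/-- Agent `k`'s information `I_t^k = (Δ_t^{(K)}, Λ_t^k)`. -/
abbrev Info (n T : ℕ) {K : ℕ} (Y U : Fin K → Type) (t : Fin n) (k : Fin K) : Type :=
  SharedHist n T Y U t × PrivHist n T Y U t k

/-- `Λ_t^{-k}`: private information of all agents other than `k`. -/
abbrev PrivOthers (n T : ℕ) {K : ℕ} (Y U : Fin K → Type) (t : Fin n) (k : Fin K) : Type :=
  (j : {j : Fin K // j ≠ k}) → PrivHist n T Y U t j.val

/-- `Λ_t^{(K)}`: private information of all agents. -/
abbrev PrivAll (n T : ℕ) {K : ℕ} (Y U : Fin K → Type) (t : Fin n) : Type :=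
  (j : Fin K) → PrivHist n T Y U t j

def sharedOf {n K : ℕ} {X : Type} {Y U : Fin K → Type} (T : ℕ)
    (ω : Traj n K X Y U) (t : Fin n) : SharedHist n T Y U t :=
  fun j => (fun s => ω.2.1 s.1 j, fun s => ω.2.2 s.1 j)

def privOf {n K : ℕ} {X : Type} {Y U : Fin K → Type} (T : ℕ)
    (ω : Traj n K X Y U) (t : Fin n) (k : Fin K) : PrivHist n T Y U t k :=
  (fun s => ω.2.1 s.1 k, fun s => ω.2.2 s.1 k)

def infoOf {n K : ℕ} {X : Type} {Y U : Fin K → Type} (T : ℕ)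
    (ω : Traj n K X Y U) (t : Fin n) (k : Fin K) : Info n T Y U t k :=
  (sharedOf T ω t, privOf T ω t k)

def privOthersOf {n K : ℕ} {X : Type} {Y U : Fin K → Type} (T : ℕ)
    (ω : Traj n K X Y U) (t : Fin n) (k : Fin K) : PrivOthers n T Y U t k :=
  fun j => privOf T ω t j.val

def privAllOf {n K : ℕ} {X : Type} {Y U : Fin K → Type} (T : ℕ)
    (ω : Traj n K X Y U) (t : Fin n) : PrivAll n T Y U t :=
  fun j => privOf T ω t j

/-- A strategy of agent `k`: `U_t^k = γ_t^k(I_t^k)`. -/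
abbrev Strategy (n T : ℕ) {K : ℕ} (Y U : Fin K → Type) (k : Fin K) : Type :=
  (t : Fin n) → Info n T Y U t k → U k

/-- A strategy profile. -/
abbrev Profile (n T : ℕ) {K : ℕ} (Y U : Fin K → Type) : Type :=
  (k : Fin K) → Strategy n T Y U k

/-- The model: initial distribution, transition kernels, observation kernels,
and a fixed dummy "previous action" used at time 1. -/
structure Model (n K : ℕ) (X : Type) (Y U : Fin K → Type) where
  S1 : PMF X
  Strans : Fin n → X → ((j : Fin K) → U j) → PMF X
  Q : (t : Fin n) → (j : Fin K) → X → ((j : Fin K) → U j) → PMF (Y j)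
  u0 : (j : Fin K) → U j

def tprev {n : ℕ} (t : Fin n) : Fin n :=
  ⟨t.val - 1, lt_of_le_of_lt (Nat.sub_le _ _) t.isLt⟩

def tlast (n : ℕ) [NeZero n] : Fin n :=
  ⟨n - 1, Nat.sub_lt (Nat.pos_of_ne_zero (NeZero.ne n)) Nat.one_pos⟩

/-- The probability that the profile `γ` assigns to the trajectory `ω` (the
deterministic action maps are enforced by 0/1 indicator factors). -/
def prob {n K : ℕ} [NeZero n] {X : Type} {Y U : Fin K → Type}
    (M : Model n K X Y U) (T : ℕ) (γ : Profile n T Y U) (ω : Traj n K X Y U) : ℝ :=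
  (M.S1 (ω.1 0)).toReal
  * (∏ j : Fin K, (M.Q 0 j (ω.1 0) M.u0 (ω.2.1 0 j)).toReal)
  * (∏ t : Fin n, if 0 < t.val then
      (M.Strans t (ω.1 (tprev t)) (ω.2.2 (tprev t)) (ω.1 t)).toReal
      * ∏ j : Fin K, (M.Q t j (ω.1 t) (ω.2.2 (tprev t)) (ω.2.1 t j)).toReal
    else 1)
  * ∏ t : Fin n, ∏ j : Fin K,
      (if ω.2.2 t j = γ j t (infoOf T ω t j) then (1 : ℝ) else 0)

section Probability

variable {n T K : ℕ} [NeZero n] {X : Type} [Fintype X] {Y U : Fin K → Type}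
  [∀ j, Fintype (Y j)] [∀ j, Fintype (U j)]

/-- Probability of an event under the measure induced by `γ`. -/
def Pr (M : Model n K X Y U) (γ : Profile n T Y U) (A : Traj n K X Y U → Prop) : ℝ :=
  ∑ ω : Traj n K X Y U, if A ω then prob M T γ ω else 0

/-- Expectation under the measure induced by `γ`. -/
def expec (M : Model n K X Y U) (γ : Profile n T Y U) (f : Traj n K X Y U → ℝ) : ℝ :=
  ∑ ω : Traj n K X Y U, prob M T γ ω * f ω

/-- Conditional probability `P(A | B)`. -/
def condPr (M : Model n K X Y U) (γ : Profile n T Y U)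
    (A B : Traj n K X Y U → Prop) : ℝ :=
  Pr M γ (fun ω => A ω ∧ B ω) / Pr M γ B

/-- Conditional expectation `E(f | B)`. -/
def condExpec (M : Model n K X Y U) (γ : Profile n T Y U)
    (f : Traj n K X Y U → ℝ) (B : Traj n K X Y U → Prop) : ℝ :=
  (∑ ω : Traj n K X Y U, if B ω then prob M T γ ω * f ω else 0) / Pr M γ B

/-- The private posterior `Ξ_t^k[i](x, λ) = P(X_t = x, Λ_t^{-k} = λ | I_t^k = i)`. -/
def Xi (M : Model n K X Y U) (γ : Profile n T Y U) (t : Fin n) (k : Fin K)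
    (i : Info n T Y U t k) (x : X) (lam : PrivOthers n T Y U t k) : ℝ :=
  condPr M γ (fun ω => ω.1 t = x ∧ privOthersOf T ω t k = lam)
    (fun ω => infoOf T ω t k = i)

/-- The centralized posterior `Θ_t[δ](x) = P(X_{t-T} = x | Δ_t^{(K)} = δ)`. -/
def Theta (M : Model n K X Y U) (γ : Profile n T Y U) (t : Fin n)
    (δ : SharedHist n T Y U t) (x : X) : ℝ :=
  condPr M γ (fun ω => ω.1 ⟨t.val - T, lt_of_le_of_lt (Nat.sub_le _ _) t.isLt⟩ = x)
    (fun ω => sharedOf T ω t = δ)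

/-- The joint centralized posterior
`Π_t^{γ}[δ](x, λ^{(K)}) = P(X_t = x, Λ_t^{(K)} = λ^{(K)} | Δ_t^{(K)} = δ)`. -/
def PiPost (M : Model n K X Y U) (γ : Profile n T Y U) (t : Fin n)
    (δ : SharedHist n T Y U t) (x : X) (lam : PrivAll n T Y U t) : ℝ :=
  condPr M γ (fun ω => ω.1 t = x ∧ privAllOf T ω t = lam)
    (fun ω => sharedOf T ω t = δ)

/-- The payoff `J_n(γ^{(K)})`. -/
def payoff (M : Model n K X Y U) (γ : Profile n T Y U)
    (ℓ : Fin n → X → ((j : Fin K) → U j) → ℝ) : ℝ :=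
  expec M γ (fun ω => ∑ t : Fin n, ℓ t (ω.1 t) (ω.2.2 t))

/-- The total cost from time `t` on. -/
def tailCost (ℓ : Fin n → X → ((j : Fin K) → U j) → ℝ) (t : Fin n)
    (ω : Traj n K X Y U) : ℝ :=
  ∑ s : Fin n, if t.val ≤ s.val then ℓ s (ω.1 s) (ω.2.2 s) else 0

/-- The cost-to-go `J_{t,n}^{γ}(i)` of agent `k`. -/
def costToGo (M : Model n K X Y U) (γ : Profile n T Y U)
    (ℓ : Fin n → X → ((j : Fin K) → U j) → ℝ) (t : Fin n) (k : Fin K)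
    (i : Info n T Y U t k) : ℝ :=
  condExpec M γ (tailCost ℓ t) (fun ω => infoOf T ω t k = i)

end Probability

/-- Joint action built from agent `k`'s action and the other agents' actions. -/
def jointAct {K : ℕ} {U : Fin K → Type} (k : Fin K) (u : U k)
    (v : (j : {j : Fin K // j ≠ k}) → U j.val) : (j : Fin K) → U j :=
  fun j => if h : j = k then cast (congrArg U h.symm) u else v ⟨j, h⟩

/-- The actions `γ_t^{-k}(δ, λ)` prescribed to the other agents. -/
def othersAct {n T K : ℕ} {Y U : Fin K → Type} (γ : Profile n T Y U) (t : Fin n)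
    (k : Fin K) (δ : SharedHist n T Y U t) (lam : PrivOthers n T Y U t k) :
    (j : {j : Fin K // j ≠ k}) → U j.val :=
  fun j => γ j.val t (δ, lam j)

section DP

variable {n T K : ℕ} [NeZero n] {X : Type} [Fintype X] {Y U : Fin K → Type}
  [∀ j, Fintype (Y j)] [∀ j, Fintype (U j)]

/-- The instantaneous term of agent `k`'s DP equation at action `u`:
`∑_{(x,λ)} ℓ(t, x, (u, γ_t^{-k}(δ, λ))) Ξ_t^k[i](x, λ)`. -/
def dpStage (M : Model n K X Y U) (γ : Profile n T Y U)
    (ℓ : Fin n → X → ((j : Fin K) → U j) → ℝ) (t : Fin n) (k : Fin K)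
    (i : Info n T Y U t k) (u : U k) : ℝ :=
  ∑ x : X, ∑ lam : PrivOthers n T Y U t k,
    ℓ t x (jointAct k u (othersAct γ t k i.1 lam)) * Xi M γ t k i x lam

/-- Agent `k`'s best-response value `𝒱_t^{γ^{-k,o}}(i)`, with the other agents'
strategies read off from `γo`. -/
def brVal (M : Model n K X Y U) (γo : Profile n T Y U)
    (ℓ : Fin n → X → ((j : Fin K) → U j) → ℝ) (t : Fin n) (k : Fin K)
    (i : Info n T Y U t k) : ℝ :=
  sInf {v : ℝ | ∃ γk : Strategy n T Y U k,
    0 < Pr M (Function.update γo k γk) (fun ω => infoOf T ω t k = i) ∧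
    v = costToGo M (Function.update γo k γk) ℓ t k i}

end DP

/-- Shared history at time `t+1` obtained from the one at time `t` by appending
the newly shared data (when `t+1 < T` nothing new is shared). -/
def stepShared {n T K : ℕ} {Y U : Fin K → Type} {t t' : Fin n} (hsucc : t'.val = t.val + 1)
    (δ : SharedHist n T Y U t) (wnew : (j : Fin K) → Y j × U j) : SharedHist n T Y U t' :=
  fun j => (fun s => if h : s.1.val + T ≤ t.val then (δ j).1 ⟨s.1, h⟩ else (wnew j).1,
            fun s => if h : s.1.val + T ≤ t.val then (δ j).2 ⟨s.1, h⟩ else (wnew j).2)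

/-- The (unique) time-`t` value `Λ_t^{-k}` determined by a time-`t+1` value
`Λ_{t+1}^{-k}` together with the newly shared data. -/
def hatPrivOthers {n T K : ℕ} {Y U : Fin K → Type} {t t' : Fin n}
    (hsucc : t'.val = t.val + 1) {k : Fin K} (lam' : PrivOthers n T Y U t' k)
    (wnew : (j : {j : Fin K // j ≠ k}) → Y j.val × U j.val) : PrivOthers n T Y U t k :=
  fun j =>
    (fun s => if h : s.1.val + T = t'.val then (wnew j).1
              else (lam' j).1 ⟨s.1, by have hs := s.2; omega⟩,
     fun s => if h : s.1.val + T = t'.val then (wnew j).2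
              else (lam' j).2 ⟨s.1, by have hs := s.2; omega⟩)

/-- The (unique) time-`t` value `Λ_t^{(K)}` determined by a time-`t+1` value
`Λ_{t+1}^{(K)}` together with the newly shared data. -/
def hatPrivAll {n T K : ℕ} {Y U : Fin K → Type} {t t' : Fin n}
    (hsucc : t'.val = t.val + 1) (lam' : PrivAll n T Y U t')
    (wnew : (j : Fin K) → Y j × U j) : PrivAll n T Y U t :=
  fun j =>
    (fun s => if h : s.1.val + T = t'.val then (wnew j).1
              else (lam' j).1 ⟨s.1, by have hs := s.2; omega⟩,
     fun s => if h : s.1.val + T = t'.val then (wnew j).2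
              else (lam' j).2 ⟨s.1, by have hs := s.2; omega⟩)

/-- The time-`t+1` information of agent `k` obtained from its time-`t`
information by appending its new observation `ynew`, its action `unew`, and the
newly shared data `wnew` of the other agents. -/
def stepInfo {n T K : ℕ} {Y U : Fin K → Type} {t t' : Fin n}
    (hsucc : t'.val = t.val + 1) (hT2 : 2 ≤ T) {k : Fin K}
    (i : Info n T Y U t k) (ynew : Y k) (unew : U k)
    (wnew : (j : {j : Fin K // j ≠ k}) → Y j.val × U j.val) : Info n T Y U t' k :=
  (fun j =>
    (fun s =>
      if h : s.1.val + T ≤ t.val then (i.1 j).1 ⟨s.1, h⟩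
      else if hk : j = k then
        cast (congrArg Y hk.symm) (i.2.1 ⟨s.1, by have hs := s.2; omega⟩)
      else (wnew ⟨j, hk⟩).1,
     fun s =>
      if h : s.1.val + T ≤ t.val then (i.1 j).2 ⟨s.1, h⟩
      else if hk : j = k then
        cast (congrArg U hk.symm) (i.2.2 ⟨s.1, by have hs := s.2; omega⟩)
      else (wnew ⟨j, hk⟩).2),
   (fun s =>
      if h : s.1.val = t'.val then ynew
      else i.2.1 ⟨s.1, by have hs := s.2; omega⟩,
    fun s =>
      if h : s.1.val = t.val then unew
      else i.2.2 ⟨s.1, by have hs := s.2; omega⟩))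

/-- The newest (time `t+1`) observation entry of a time-`t+1` private history. -/
def newestObs {n T K : ℕ} {Y U : Fin K → Type} {t' : Fin n} (hT1 : 1 ≤ T) {k : Fin K}
    (lam : PrivHist n T Y U t' k) : Y k :=
  lam.1 ⟨t', by omega⟩

/-- The newest (time `t`) action entry of a time-`t+1` private history (`T ≥ 2`). -/
def newestAct {n T K : ℕ} {Y U : Fin K → Type} {t t' : Fin n}
    (hsucc : t'.val = t.val + 1) (hT2 : 2 ≤ T) {k : Fin K}
    (lam : PrivHist n T Y U t' k) : U k :=
  lam.2 ⟨t, by omega⟩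

/-- Agent `k`'s own observation history `Y_{1:t}^k` read off from `I_t^k`. -/
def ownY {n T K : ℕ} {Y U : Fin K → Type} {t : Fin n} {k : Fin K}
    (i : Info n T Y U t k) : {s : Fin n // s.val ≤ t.val} → Y k :=
  fun s => if h : s.1.val + T ≤ t.val then (i.1 k).1 ⟨s.1, h⟩
           else i.2.1 ⟨s.1, by have hs := s.2; omega⟩

/-- Agent `k`'s own action history `U_{1:t-1}^k` read off from `I_t^k`. -/
def ownU {n T K : ℕ} {Y U : Fin K → Type} {t : Fin n} {k : Fin K}
    (i : Info n T Y U t k) : {s : Fin n // s.val < t.val} → U k :=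
  fun s => if h : s.1.val + T ≤ t.val then (i.1 k).2 ⟨s.1, h⟩
           else i.2.2 ⟨s.1, by have hs := s.2; omega⟩

/-! ### Centralized (single-agent) POMDP -/

abbrev CTraj (n : ℕ) (Xk Yk Uk : Type) : Type :=
  (Fin n → Xk) × (Fin n → Yk) × (Fin n → Uk)

/-- A centralized strategy `U_t = γ_t(Y_{1:t}, U_{1:t-1})`. -/
abbrev CStrategy (n : ℕ) (Yk Uk : Type) : Type :=
  (t : Fin n) → ({s : Fin n // s.val ≤ t.val} → Yk) → ({s : Fin n // s.val < t.val} → Uk) → Uk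

/-- A centralized POMDP model (observation kernel depending on the state only). -/
structure CModel (n : ℕ) (Xk Yk Uk : Type) where
  S1 : PMF Xk
  Strans : Fin n → Xk → Uk → PMF Xk
  Q : Fin n → Xk → PMF Yk

def cprob {n : ℕ} [NeZero n] {Xk Yk Uk : Type} (M : CModel n Xk Yk Uk)
    (γ : CStrategy n Yk Uk) (ω : CTraj n Xk Yk Uk) : ℝ :=
  (M.S1 (ω.1 0)).toReal * (M.Q 0 (ω.1 0) (ω.2.1 0)).toReal
  * (∏ t : Fin n, if 0 < t.val then
      (M.Strans t (ω.1 (tprev t)) (ω.2.2 (tprev t)) (ω.1 t)).toReal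
      * (M.Q t (ω.1 t) (ω.2.1 t)).toReal
    else 1)
  * ∏ t : Fin n,
      (if ω.2.2 t = γ t (fun s => ω.2.1 s.1) (fun s => ω.2.2 s.1) then (1:ℝ) else 0)

/-- Expected total cost of a centralized strategy. -/
def cExpCost {n : ℕ} [NeZero n] {Xk Yk Uk : Type} [Fintype Xk] [Fintype Yk] [Fintype Uk]
    (M : CModel n Xk Yk Uk) (ℓk : Fin n → Xk → Uk → ℝ) (γ : CStrategy n Yk Uk) : ℝ :=
  ∑ ω : CTraj n Xk Yk Uk, cprob M γ ω * ∑ t : Fin n, ℓk t (ω.1 t) (ω.2.2 t)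

/-- Optimal value of the centralized POMDP. -/
def cValue {n : ℕ} [NeZero n] {Xk Yk Uk : Type} [Fintype Xk] [Fintype Yk] [Fintype Uk]
    (M : CModel n Xk Yk Uk) (ℓk : Fin n → Xk → Uk → ℝ) : ℝ :=
  sInf {v : ℝ | ∃ γ : CStrategy n Yk Uk, v = cExpCost M ℓk γ}

/-! ### Auxiliary development for Statement 7 -/

section Aux7

variable {n T K : ℕ} [NeZero n] {X : Type} [Fintype X] {Y U : Fin K → Type}
  [∀ j, Fintype (Y j)] [∀ j, Fintype (U j)]

private lemma sum_pmf_toReal {β : Type} [Fintype β] (p : PMF β) :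
    ∑ b : β, (p b).toReal = 1 := by
  rw [← ENNReal.toReal_one, ← p.tsum_coe, tsum_fintype]
  exact (ENNReal.toReal_sum (fun b _ => p.apply_ne_top b)).symm

private lemma sum_pi_ind {β : Fin K → Type} [∀ j, Fintype (β j)]
    (v : (j : Fin K) → β j) :
    ∑ c : (j : Fin K) → β j, ∏ j, (if c j = v j then (1:ℝ) else 0) = 1 := by
  rw [← Fintype.prod_sum (fun j (cj : β j) => if cj = v j then (1:ℝ) else 0)]
  simp

private lemma sum_pi_pmf {β : Fin K → Type} [∀ j, Fintype (β j)]
    (q : (j : Fin K) → PMF (β j)) :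
    ∑ b : (j : Fin K) → β j, ∏ j, ((q j) (b j)).toReal = 1 := by
  rw [← Fintype.prod_sum (fun j (bj : β j) => ((q j) bj).toReal)]
  simp [sum_pmf_toReal]

/-- `τ` : the index `t - T` of the most recent shared time. -/
def tauIdx (T : ℕ) (t : Fin n) : Fin n :=
  ⟨t.val - T, lt_of_le_of_lt (Nat.sub_le _ _) t.isLt⟩

/-- Insert a value at index `m` into a function defined away from `m`. -/
def insF {β : Type} (m : Fin n) (a : β) (r : {s : Fin n // s ≠ m} → β) : Fin n → β :=
  fun s => if h : s = m then a else r ⟨s, h⟩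

lemma insF_self {β : Type} (m : Fin n) (a : β) (r : {s : Fin n // s ≠ m} → β) :
    insF m a r m = a := dif_pos rfl

lemma insF_ne {β : Type} (m : Fin n) (a : β) (r : {s : Fin n // s ≠ m} → β)
    {s : Fin n} (h : s ≠ m) : insF m a r s = r ⟨s, h⟩ := dif_neg h

/-- The data of a trajectory away from time `m`. -/
abbrev Rest (n K : ℕ) (X : Type) (Y U : Fin K → Type) (m : Fin n) : Type :=
  ({s : Fin n // s ≠ m} → X) × ({s : Fin n // s ≠ m} → ((j : Fin K) → Y j))
    × ({s : Fin n // s ≠ m} → ((j : Fin K) → U j))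

/-- The data of a trajectory at a single time. -/
abbrev Vnew (K : ℕ) (X : Type) (Y U : Fin K → Type) : Type :=
  X × ((j : Fin K) → Y j) × ((j : Fin K) → U j)

/-- Reassemble a trajectory from its data away from `m` and its data at `m`. -/
def omegaOf (m : Fin n) (r : Rest n K X Y U m) (v : Vnew K X Y U) : Traj n K X Y U :=
  (insF m v.1 r.1, insF m v.2.1 r.2.1, insF m v.2.2 r.2.2)

lemma omegaOf_x_self (m : Fin n) (r : Rest n K X Y U m) (v : Vnew K X Y U) :
    (omegaOf m r v).1 m = v.1 := insF_self _ _ _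

lemma omegaOf_y_self (m : Fin n) (r : Rest n K X Y U m) (v : Vnew K X Y U) :
    (omegaOf m r v).2.1 m = v.2.1 := insF_self _ _ _

lemma omegaOf_u_self (m : Fin n) (r : Rest n K X Y U m) (v : Vnew K X Y U) :
    (omegaOf m r v).2.2 m = v.2.2 := insF_self _ _ _

lemma omegaOf_x_ne (m : Fin n) (r : Rest n K X Y U m) (v : Vnew K X Y U)
    {s : Fin n} (h : s ≠ m) : (omegaOf m r v).1 s = r.1 ⟨s, h⟩ := insF_ne _ _ _ h

lemma omegaOf_y_ne (m : Fin n) (r : Rest n K X Y U m) (v : Vnew K X Y U)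
    {s : Fin n} (h : s ≠ m) : (omegaOf m r v).2.1 s = r.2.1 ⟨s, h⟩ := insF_ne _ _ _ h

lemma omegaOf_u_ne (m : Fin n) (r : Rest n K X Y U m) (v : Vnew K X Y U)
    {s : Fin n} (h : s ≠ m) : (omegaOf m r v).2.2 s = r.2.2 ⟨s, h⟩ := insF_ne _ _ _ h

lemma omegaOf_bijective (m : Fin n) :
    Function.Bijective (fun p : Rest n K X Y U m × Vnew K X Y U => omegaOf m p.1 p.2) := by
  rw [Function.bijective_iff_has_inverse]
  refine ⟨fun ω => ⟨(fun s => ω.1 s.1, fun s => ω.2.1 s.1, fun s => ω.2.2 s.1),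
    (ω.1 m, ω.2.1 m, ω.2.2 m)⟩, ?_, ?_⟩
  · rintro ⟨r, v⟩
    refine Prod.ext ?_ ?_
    · refine Prod.ext ?_ (Prod.ext ?_ ?_) <;> funext s <;>
        simp [omegaOf, insF_ne _ _ _ s.2]
    · refine Prod.ext ?_ (Prod.ext ?_ ?_) <;>
        simp [omegaOf, insF_self]
  · intro ω
    refine Prod.ext ?_ (Prod.ext ?_ ?_) <;> funext s <;>
      · by_cases h : s = m
        · subst h; simp [omegaOf, insF_self]
        · simp [omegaOf, insF_ne _ _ _ h]

lemma sum_split_traj (m : Fin n) (F : Traj n K X Y U → ℝ) :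
    ∑ ω : Traj n K X Y U, F ω
      = ∑ r : Rest n K X Y U m, ∑ v : Vnew K X Y U, F (omegaOf m r v) :=
  calc ∑ ω : Traj n K X Y U, F ω
      = ∑ p : Rest n K X Y U m × Vnew K X Y U, F (omegaOf m p.1 p.2) :=
        (Fintype.sum_bijective _ (omegaOf_bijective m)
          (fun p => F (omegaOf m p.1 p.2)) F (fun p => rfl)).symm
    _ = ∑ r : Rest n K X Y U m, ∑ v : Vnew K X Y U, F (omegaOf m r v) := by
        rw [Fintype.sum_prod_type]

/-- `infoOf` at time `m` only depends on observations up to `m` and actions before `m`. -/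
lemma infoOf_congr (hT1 : 1 ≤ T) (ω ω' : Traj n K X Y U) (m : Fin n) (j : Fin K)
    (hy : ∀ s : Fin n, s.val ≤ m.val → ω.2.1 s = ω'.2.1 s)
    (hu : ∀ s : Fin n, s.val < m.val → ω.2.2 s = ω'.2.2 s) :
    infoOf T ω m j = infoOf T ω' m j := by
  unfold infoOf sharedOf privOf
  refine Prod.ext ?_ ?_
  · funext j'
    refine Prod.ext ?_ ?_ <;> funext s
    · exact congrFun (hy s.1 (by have := s.2; omega)) j'
    · exact congrFun (hu s.1 (by have := s.2; omega)) j'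
  · refine Prod.ext ?_ ?_ <;> funext s
    · exact congrFun (hy s.1 s.2.2) j
    · exact congrFun (hu s.1 s.2.2) j

lemma sharedOf_congr (ω ω' : Traj n K X Y U) (t : Fin n)
    (hy : ∀ s : Fin n, s.val + T ≤ t.val → ω.2.1 s = ω'.2.1 s)
    (hu : ∀ s : Fin n, s.val + T ≤ t.val → ω.2.2 s = ω'.2.2 s) :
    sharedOf T ω t = sharedOf T ω' t := by
  funext j
  refine Prod.ext ?_ ?_ <;> funext s
  · exact congrFun (hy s.1 s.2) j
  · exact congrFun (hu s.1 s.2) j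

lemma shared_vals {ω : Traj n K X Y U} {t : Fin n} {δ : SharedHist n T Y U t}
    (hs : sharedOf T ω t = δ) (s : Fin n) (h : s.val + T ≤ t.val) (j : Fin K) :
    ω.2.1 s j = (δ j).1 ⟨s, h⟩ ∧ ω.2.2 s j = (δ j).2 ⟨s, h⟩ :=
  ⟨congrFun (congrArg Prod.fst (congrFun hs j)) ⟨s, h⟩,
   congrFun (congrArg Prod.snd (congrFun hs j)) ⟨s, h⟩⟩

/-- Probability with the time-dependent factors truncated to times `< m`. -/
def probTrunc (M : Model n K X Y U) (γ : Profile n T Y U) (m : ℕ)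
    (ω : Traj n K X Y U) : ℝ :=
  (M.S1 (ω.1 0)).toReal
  * (∏ j : Fin K, (M.Q 0 j (ω.1 0) M.u0 (ω.2.1 0 j)).toReal)
  * (∏ s : Fin n, if 0 < s.val ∧ s.val < m then
      (M.Strans s (ω.1 (tprev s)) (ω.2.2 (tprev s)) (ω.1 s)).toReal
      * ∏ j : Fin K, (M.Q s j (ω.1 s) (ω.2.2 (tprev s)) (ω.2.1 s j)).toReal
    else 1)
  * ∏ s : Fin n, ∏ j : Fin K,
      (if s.val < m then (if ω.2.2 s j = γ j s (infoOf T ω s j) then (1 : ℝ) else 0) else 1)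

lemma probTrunc_top (M : Model n K X Y U) (γ : Profile n T Y U) (ω : Traj n K X Y U) :
    probTrunc M γ n ω = prob M T γ ω := by
  unfold probTrunc prob
  congr 1
  · congr 1
    refine Finset.prod_congr rfl fun s _ => ?_
    simp [s.isLt]
  · refine Finset.prod_congr rfl fun s _ => ?_
    refine Finset.prod_congr rfl fun j _ => ?_
    simp [s.isLt]

private lemma prod_if_succ (m : Fin n) (hm : 0 < m.val) (f : Fin n → ℝ) :
    (∏ s : Fin n, if 0 < s.val ∧ s.val < m.val + 1 then f s else 1)
      = (∏ s : Fin n, if 0 < s.val ∧ s.val < m.val then f s else 1) * f m := by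
  have h : ∀ s : Fin n, (if 0 < s.val ∧ s.val < m.val + 1 then f s else 1)
      = (if 0 < s.val ∧ s.val < m.val then f s else 1) * (if s = m then f s else 1) := by
    intro s
    rcases eq_or_ne s m with rfl | hs
    · rw [if_pos ⟨hm, Nat.lt_succ_self _⟩, if_neg (by omega), if_pos rfl, one_mul]
    · have hv : s.val ≠ m.val := fun h' => hs (Fin.ext h')
      rw [if_neg hs, mul_one]
      have hiff : (0 < s.val ∧ s.val < m.val + 1) ↔ (0 < s.val ∧ s.val < m.val) := by
        constructor <;> rintro ⟨ha, hb⟩ <;> exact ⟨ha, by omega⟩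
      rw [if_congr hiff rfl rfl]

  rw [Finset.prod_congr rfl (fun s _ => h s), Finset.prod_mul_distrib,
    Finset.prod_ite_eq' Finset.univ m f]
  simp

private lemma prod_ind_succ (m : Fin n) (g : Fin n → Fin K → ℝ) :
    (∏ s : Fin n, ∏ j : Fin K, if s.val < m.val + 1 then g s j else 1)
      = (∏ s : Fin n, ∏ j : Fin K, if s.val < m.val then g s j else 1) * ∏ j : Fin K, g m j := by
  have h : ∀ s : Fin n, (∏ j : Fin K, if s.val < m.val + 1 then g s j else 1)
      = (∏ j : Fin K, if s.val < m.val then g s j else 1)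
        * (if s = m then ∏ j : Fin K, g s j else 1) := by
    intro s
    rcases eq_or_ne s m with rfl | hs
    · rw [if_pos rfl]
      have h1 : ¬ s.val < s.val := lt_irrefl _
      have h2 : s.val < s.val + 1 := Nat.lt_succ_self _
      simp [h1, h2]
    · have hv : s.val ≠ m.val := fun h' => hs (Fin.ext h')
      rw [if_neg hs, mul_one]
      by_cases h1 : s.val < m.val
      · have h2 : s.val < m.val + 1 := by omega
        simp [h1, h2]
      · have h2 : ¬ s.val < m.val + 1 := by omega
        simp [h1, h2]
  rw [Finset.prod_congr rfl (fun s _ => h s), Finset.prod_mul_distrib,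
    Finset.prod_ite_eq' Finset.univ m (fun s => ∏ j : Fin K, g s j)]
  simp

lemma probTrunc_succ (M : Model n K X Y U) (γ : Profile n T Y U) (m : Fin n)
    (hm : 0 < m.val) (ω : Traj n K X Y U) :
    probTrunc M γ (m.val + 1) ω =
      probTrunc M γ m.val ω *
        ((M.Strans m (ω.1 (tprev m)) (ω.2.2 (tprev m)) (ω.1 m)).toReal
          * ∏ j : Fin K, (M.Q m j (ω.1 m) (ω.2.2 (tprev m)) (ω.2.1 m j)).toReal)
        * ∏ j : Fin K, (if ω.2.2 m j = γ j m (infoOf T ω m j) then (1:ℝ) else 0) := by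
  unfold probTrunc
  rw [prod_if_succ m hm, prod_ind_succ m]
  ring

lemma probTrunc_congr (hT1 : 1 ≤ T) (M : Model n K X Y U) (γ : Profile n T Y U) (m : ℕ) (hm : 0 < m)
    (ω ω' : Traj n K X Y U)
    (hx : ∀ s : Fin n, s.val < m → ω.1 s = ω'.1 s)
    (hy : ∀ s : Fin n, s.val < m → ω.2.1 s = ω'.2.1 s)
    (hu : ∀ s : Fin n, s.val < m → ω.2.2 s = ω'.2.2 s) :
    probTrunc M γ m ω = probTrunc M γ m ω' := by
  have h0 : ((0 : Fin n)).val < m := by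
    have : ((0 : Fin n)).val = 0 := Fin.val_zero n
    omega
  unfold probTrunc
  rw [hx 0 h0, hy 0 h0]
  congr 1
  · congr 1
    refine Finset.prod_congr rfl fun s _ => ?_
    by_cases hs : 0 < s.val ∧ s.val < m
    · have htp : (tprev s).val < m := by
        have : (tprev s).val = s.val - 1 := rfl
        omega
      rw [if_pos hs, if_pos hs, hx s hs.2, hy s hs.2, hu (tprev s) htp, hx (tprev s) htp]
    · rw [if_neg hs, if_neg hs]
  · refine Finset.prod_congr rfl fun s _ => ?_
    refine Finset.prod_congr rfl fun j _ => ?_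
    by_cases hs : s.val < m
    · rw [if_pos hs, if_pos hs, hu s hs,
        infoOf_congr hT1 ω ω' s j (fun r hr => hy r (by omega)) (fun r hr => hu r (by omega))]
    · rw [if_neg hs, if_neg hs]

/-- The truncated strategy-weighted sum over trajectories consistent with
`X_{t-T} = x` and `Δ_t = δ`. -/
def SS (M : Model n K X Y U) (γ : Profile n T Y U) (x : X) (t : Fin n)
    (δ : SharedHist n T Y U t) (m : ℕ) : ℝ :=
  ∑ ω : Traj n K X Y U,
    if (ω.1 (tauIdx T t) = x ∧ sharedOf T ω t = δ) then probTrunc M γ m ω else 0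

lemma SS_step (hT1 : 1 ≤ T) (M : Model n K X Y U) (γ : Profile n T Y U) (x : X) (t : Fin n)
    (δ : SharedHist n T Y U t) [Nonempty X] [∀ j, Nonempty (Y j)] [∀ j, Nonempty (U j)]
    (m : Fin n) (hm : t.val - T < m.val) :
    SS M γ x t δ m.val = (Fintype.card (Vnew K X Y U) : ℝ) * SS M γ x t δ (m.val + 1) := by
  have hm0 : 0 < m.val := Nat.lt_of_le_of_lt (Nat.zero_le _) hm
  have hmne : tprev m ≠ m := by
    refine Fin.ne_of_val_ne ?_
    show m.val - 1 ≠ m.val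
    omega
  have hτne : tauIdx T t ≠ m := by
    refine Fin.ne_of_val_ne ?_
    show t.val - T ≠ m.val
    omega
  set v₀ : Vnew K X Y U := Classical.arbitrary _ with hv₀
  -- strategy-free parts only depend on `r`
  have hPiff : ∀ (r : Rest n K X Y U m) (v : Vnew K X Y U),
      ((omegaOf m r v).1 (tauIdx T t) = x ∧ sharedOf T (omegaOf m r v) t = δ)
        ↔ ((omegaOf m r v₀).1 (tauIdx T t) = x ∧ sharedOf T (omegaOf m r v₀) t = δ) := by
    intro r v
    have e1 : (omegaOf m r v).1 (tauIdx T t) = (omegaOf m r v₀).1 (tauIdx T t) := by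
      rw [omegaOf_x_ne m r v hτne, omegaOf_x_ne m r v₀ hτne]
    have e2 : sharedOf T (omegaOf m r v) t = sharedOf T (omegaOf m r v₀) t := by
      refine sharedOf_congr _ _ t ?_ ?_ <;> intro s hs
      · have hsne : s ≠ m := Fin.ne_of_val_ne (by omega)
        rw [omegaOf_y_ne m r v hsne, omegaOf_y_ne m r v₀ hsne]
      · have hsne : s ≠ m := Fin.ne_of_val_ne (by omega)
        rw [omegaOf_u_ne m r v hsne, omegaOf_u_ne m r v₀ hsne]
    rw [e1, e2]
  have hPT : ∀ (r : Rest n K X Y U m) (v : Vnew K X Y U),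
      probTrunc M γ m.val (omegaOf m r v) = probTrunc M γ m.val (omegaOf m r v₀) := by
    intro r v
    refine probTrunc_congr hT1 M γ m.val hm0 _ _ ?_ ?_ ?_ <;> intro s hs
    · have hsne : s ≠ m := Fin.ne_of_val_ne (by omega)
      rw [omegaOf_x_ne m r v hsne, omegaOf_x_ne m r v₀ hsne]
    · have hsne : s ≠ m := Fin.ne_of_val_ne (by omega)
      rw [omegaOf_y_ne m r v hsne, omegaOf_y_ne m r v₀ hsne]
    · have hsne : s ≠ m := Fin.ne_of_val_ne (by omega)
      rw [omegaOf_u_ne m r v hsne, omegaOf_u_ne m r v₀ hsne]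
  -- abbreviation for the `r`-only summand
  set G : Rest n K X Y U m → ℝ := fun r =>
    if ((omegaOf m r v₀).1 (tauIdx T t) = x ∧ sharedOf T (omegaOf m r v₀) t = δ)
    then probTrunc M γ m.val (omegaOf m r v₀) else 0 with hG
  -- LHS
  have hLHS : SS M γ x t δ m.val = (Fintype.card (Vnew K X Y U) : ℝ) * ∑ r, G r := by
    unfold SS
    rw [sum_split_traj m]
    have : ∀ r : Rest n K X Y U m,
        (∑ v : Vnew K X Y U,
          if ((omegaOf m r v).1 (tauIdx T t) = x ∧ sharedOf T (omegaOf m r v) t = δ)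
          then probTrunc M γ m.val (omegaOf m r v) else 0)
        = (Fintype.card (Vnew K X Y U) : ℝ) * G r := by
      intro r
      have heach : ∀ v : Vnew K X Y U,
          (if ((omegaOf m r v).1 (tauIdx T t) = x ∧ sharedOf T (omegaOf m r v) t = δ)
            then probTrunc M γ m.val (omegaOf m r v) else 0) = G r := by
        intro v
        simp only [hG]
        by_cases h : ((omegaOf m r v₀).1 (tauIdx T t) = x ∧ sharedOf T (omegaOf m r v₀) t = δ)
        · rw [if_pos ((hPiff r v).mpr h), if_pos h, hPT r v]
        · rw [if_neg (fun hh => h ((hPiff r v).mp hh)), if_neg h]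
      rw [Finset.sum_congr rfl (fun v _ => heach v), Finset.sum_const, Finset.card_univ,
        nsmul_eq_mul]
    rw [Finset.sum_congr rfl (fun r _ => this r), ← Finset.mul_sum]
  -- RHS
  have hRHS : SS M γ x t δ (m.val + 1) = ∑ r, G r := by
    unfold SS
    rw [sum_split_traj m]
    refine Finset.sum_congr rfl fun r _ => ?_
    -- the extra factor at time `m`, summed over `v`, equals 1
    have hW : (∑ v : Vnew K X Y U,
        ((M.Strans m ((omegaOf m r v).1 (tprev m)) ((omegaOf m r v).2.2 (tprev m))
            ((omegaOf m r v).1 m)).toReal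
          * ∏ j : Fin K, (M.Q m j ((omegaOf m r v).1 m) ((omegaOf m r v).2.2 (tprev m))
              ((omegaOf m r v).2.1 m j)).toReal)
        * ∏ j : Fin K, (if (omegaOf m r v).2.2 m j
            = γ j m (infoOf T (omegaOf m r v) m j) then (1:ℝ) else 0)) = 1 := by
      have hxp : ∀ v : Vnew K X Y U, (omegaOf m r v).1 (tprev m) = r.1 ⟨tprev m, hmne⟩ :=
        fun v => omegaOf_x_ne m r v hmne
      have hup : ∀ v : Vnew K X Y U, (omegaOf m r v).2.2 (tprev m) = r.2.2 ⟨tprev m, hmne⟩ :=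
        fun v => omegaOf_u_ne m r v hmne
      have hinfo : ∀ (a : X) (b : (j : Fin K) → Y j) (c : (j : Fin K) → U j) (j : Fin K),
          infoOf T (omegaOf m r (a, b, c)) m j
            = infoOf T (omegaOf m r (a, b, Classical.arbitrary _)) m j := by
        intro a b c j
        refine infoOf_congr hT1 _ _ m j (fun s _ => rfl) (fun s hs => ?_)
        have hsne : s ≠ m := Fin.ne_of_val_ne (by omega)
        rw [omegaOf_u_ne m r _ hsne, omegaOf_u_ne m r _ hsne]
      rw [Fintype.sum_prod_type]
      have inner1 : ∀ a : X,
          (∑ p : ((j : Fin K) → Y j) × ((j : Fin K) → U j),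
            ((M.Strans m ((omegaOf m r (a, p)).1 (tprev m)) ((omegaOf m r (a, p)).2.2 (tprev m))
                ((omegaOf m r (a, p)).1 m)).toReal
              * ∏ j : Fin K, (M.Q m j ((omegaOf m r (a, p)).1 m)
                  ((omegaOf m r (a, p)).2.2 (tprev m)) ((omegaOf m r (a, p)).2.1 m j)).toReal)
            * ∏ j : Fin K, (if (omegaOf m r (a, p)).2.2 m j
                = γ j m (infoOf T (omegaOf m r (a, p)) m j) then (1:ℝ) else 0))
          = (M.Strans m (r.1 ⟨tprev m, hmne⟩) (r.2.2 ⟨tprev m, hmne⟩) a).toReal := by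
        intro a
        rw [Fintype.sum_prod_type]
        have inner2 : ∀ b : (j : Fin K) → Y j,
            (∑ c : (j : Fin K) → U j,
              ((M.Strans m ((omegaOf m r (a, b, c)).1 (tprev m))
                  ((omegaOf m r (a, b, c)).2.2 (tprev m)) ((omegaOf m r (a, b, c)).1 m)).toReal
                * ∏ j : Fin K, (M.Q m j ((omegaOf m r (a, b, c)).1 m)
                    ((omegaOf m r (a, b, c)).2.2 (tprev m))
                    ((omegaOf m r (a, b, c)).2.1 m j)).toReal)
              * ∏ j : Fin K, (if (omegaOf m r (a, b, c)).2.2 m j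
                  = γ j m (infoOf T (omegaOf m r (a, b, c)) m j) then (1:ℝ) else 0))
            = (M.Strans m (r.1 ⟨tprev m, hmne⟩) (r.2.2 ⟨tprev m, hmne⟩) a).toReal
              * ∏ j : Fin K, (M.Q m j a (r.2.2 ⟨tprev m, hmne⟩) (b j)).toReal := by
          intro b
          have hsummand : ∀ c : (j : Fin K) → U j,
              ((M.Strans m ((omegaOf m r (a, b, c)).1 (tprev m))
                  ((omegaOf m r (a, b, c)).2.2 (tprev m)) ((omegaOf m r (a, b, c)).1 m)).toReal
                * ∏ j : Fin K, (M.Q m j ((omegaOf m r (a, b, c)).1 m)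
                    ((omegaOf m r (a, b, c)).2.2 (tprev m))
                    ((omegaOf m r (a, b, c)).2.1 m j)).toReal)
              * ∏ j : Fin K, (if (omegaOf m r (a, b, c)).2.2 m j
                  = γ j m (infoOf T (omegaOf m r (a, b, c)) m j) then (1:ℝ) else 0)
              = ((M.Strans m (r.1 ⟨tprev m, hmne⟩) (r.2.2 ⟨tprev m, hmne⟩) a).toReal
                * ∏ j : Fin K, (M.Q m j a (r.2.2 ⟨tprev m, hmne⟩) (b j)).toReal)
                * ∏ j : Fin K, (if c j
                    = γ j m (infoOf T (omegaOf m r (a, b, Classical.arbitrary _)) m j)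
                  then (1:ℝ) else 0) := by
            intro c
            rw [hxp (a, b, c), hup (a, b, c), omegaOf_x_self]
            congr 1
            · congr 1
              refine Finset.prod_congr rfl fun j _ => ?_
              rw [omegaOf_y_self]
            · refine Finset.prod_congr rfl fun j _ => ?_
              rw [omegaOf_u_self, hinfo a b c j]
          rw [Finset.sum_congr rfl (fun c _ => hsummand c), ← Finset.mul_sum,
            sum_pi_ind, mul_one]
        rw [Finset.sum_congr rfl (fun b _ => inner2 b), ← Finset.mul_sum,
          sum_pi_pmf (fun j => M.Q m j a (r.2.2 ⟨tprev m, hmne⟩)), mul_one]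
      rw [Finset.sum_congr rfl (fun a _ => inner1 a),
        sum_pmf_toReal (M.Strans m (r.1 ⟨tprev m, hmne⟩) (r.2.2 ⟨tprev m, hmne⟩))]
    -- now compute the inner sum over `v`
    have heach : ∀ v : Vnew K X Y U,
        (if ((omegaOf m r v).1 (tauIdx T t) = x ∧ sharedOf T (omegaOf m r v) t = δ)
          then probTrunc M γ (m.val + 1) (omegaOf m r v) else 0)
        = G r *
          (((M.Strans m ((omegaOf m r v).1 (tprev m)) ((omegaOf m r v).2.2 (tprev m))
              ((omegaOf m r v).1 m)).toReal
            * ∏ j : Fin K, (M.Q m j ((omegaOf m r v).1 m) ((omegaOf m r v).2.2 (tprev m))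
                ((omegaOf m r v).2.1 m j)).toReal)
          * ∏ j : Fin K, (if (omegaOf m r v).2.2 m j
              = γ j m (infoOf T (omegaOf m r v) m j) then (1:ℝ) else 0)) := by
      intro v
      simp only [hG]
      rw [probTrunc_succ M γ m hm0]
      by_cases h : ((omegaOf m r v₀).1 (tauIdx T t) = x ∧ sharedOf T (omegaOf m r v₀) t = δ)
      · rw [if_pos ((hPiff r v).mpr h), if_pos h, hPT r v]
        ring
      · rw [if_neg (fun hh => h ((hPiff r v).mp hh)), if_neg h, zero_mul]
    rw [Finset.sum_congr rfl (fun v _ => heach v), ← Finset.mul_sum, hW, mul_one]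
  rw [hLHS, hRHS]

lemma SS_telescope (hT1 : 1 ≤ T) (M : Model n K X Y U) (γ : Profile n T Y U) (x : X)
    (t : Fin n) (δ : SharedHist n T Y U t)
    [Nonempty X] [∀ j, Nonempty (Y j)] [∀ j, Nonempty (U j)] :
    SS M γ x t δ (t.val - T + 1)
      = (Fintype.card (Vnew K X Y U) : ℝ) ^ (n - (t.val - T + 1)) * SS M γ x t δ n := by
  have hτ1 : t.val - T + 1 ≤ n := by have := t.isLt; omega
  have main : ∀ m : ℕ, t.val - T + 1 ≤ m → m ≤ n →
      SS M γ x t δ (t.val - T + 1)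
        = (Fintype.card (Vnew K X Y U) : ℝ) ^ (m - (t.val - T + 1)) * SS M γ x t δ m := by
    intro m hm
    induction m, hm using Nat.le_induction with
    | base => intro _; simp
    | succ m hm' ih =>
      intro hmn
      have hmn' : m < n := by omega
      have hstep := SS_step hT1 M γ x t δ ⟨m, hmn'⟩ (by show t.val - T < m; omega)
      have hval : ((⟨m, hmn'⟩ : Fin n)).val = m := rfl
      rw [hval] at hstep
      rw [ih (by omega), hstep,
        show m + 1 - (t.val - T + 1) = (m - (t.val - T + 1)) + 1 from by omega, pow_succ]
      ring
  exact main n hτ1 le_rfl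

/-- A canonical trajectory consistent with the shared history `δ`. -/
def trajOfShared [Nonempty X] [∀ j, Nonempty (Y j)] [∀ j, Nonempty (U j)]
    (t : Fin n) (δ : SharedHist n T Y U t) : Traj n K X Y U :=
  (fun _ => Classical.arbitrary X,
   fun s j => if h : s.val + T ≤ t.val then (δ j).1 ⟨s, h⟩ else Classical.arbitrary (Y j),
   fun s j => if h : s.val + T ≤ t.val then (δ j).2 ⟨s, h⟩ else Classical.arbitrary (U j))

/-- The strategy-dependent indicator factor, a function of `(γ, δ)` only. -/
def cFac [Nonempty X] [∀ j, Nonempty (Y j)] [∀ j, Nonempty (U j)]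
    (γ : Profile n T Y U) (t : Fin n) (δ : SharedHist n T Y U t) : ℝ :=
  ∏ s : Fin n, ∏ j : Fin K,
    if h : s.val + T ≤ t.val then
      (if (δ j).2 ⟨s, h⟩ = γ j s (infoOf T (trajOfShared (X := X) t δ) s j) then (1:ℝ) else 0)
    else 1

/-- The strategy-independent part of the truncated probability. -/
def gFun (M : Model n K X Y U) (t : Fin n) (ω : Traj n K X Y U) : ℝ :=
  (M.S1 (ω.1 0)).toReal
  * (∏ j : Fin K, (M.Q 0 j (ω.1 0) M.u0 (ω.2.1 0 j)).toReal)
  * (∏ s : Fin n, if 0 < s.val ∧ s.val < t.val - T + 1 then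
      (M.Strans s (ω.1 (tprev s)) (ω.2.2 (tprev s)) (ω.1 s)).toReal
      * ∏ j : Fin K, (M.Q s j (ω.1 s) (ω.2.2 (tprev s)) (ω.2.1 s j)).toReal
    else 1)

/-- The strategy-independent joint weight of `(X_{t-T} = x, Δ_t = δ)`. -/
def FF (M : Model n K X Y U) (x : X) (t : Fin n) (δ : SharedHist n T Y U t) : ℝ :=
  ∑ ω : Traj n K X Y U,
    if (ω.1 (tauIdx T t) = x ∧ sharedOf T ω t = δ) then gFun (T := T) M t ω else 0

lemma SS_tau (hT1 : 1 ≤ T) (M : Model n K X Y U) (γ : Profile n T Y U) (x : X)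
    (t : Fin n) (hTt : T ≤ t.val) (δ : SharedHist n T Y U t)
    [Nonempty X] [∀ j, Nonempty (Y j)] [∀ j, Nonempty (U j)] :
    SS M γ x t δ (t.val - T + 1) = cFac (X := X) γ t δ * FF M x t δ := by
  unfold SS FF
  rw [Finset.mul_sum]
  refine Finset.sum_congr rfl fun ω _ => ?_
  by_cases hP : (ω.1 (tauIdx T t) = x ∧ sharedOf T ω t = δ)
  · rw [if_pos hP, if_pos hP]
    have hδ := hP.2
    have hind : (∏ s : Fin n, ∏ j : Fin K,
        (if s.val < t.val - T + 1 then
          (if ω.2.2 s j = γ j s (infoOf T ω s j) then (1:ℝ) else 0) else 1))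
        = cFac (X := X) γ t δ := by
      unfold cFac
      refine Finset.prod_congr rfl fun s _ => ?_
      refine Finset.prod_congr rfl fun j _ => ?_
      by_cases h : s.val + T ≤ t.val
      · have hlt : s.val < t.val - T + 1 := by omega
        rw [if_pos hlt, dif_pos h]
        have e1 : ω.2.2 s j = (δ j).2 ⟨s, h⟩ := (shared_vals hδ s h j).2
        have e2 : infoOf T ω s j = infoOf T (trajOfShared (X := X) t δ) s j := by
          refine infoOf_congr hT1 _ _ s j ?_ ?_
          · intro r hr
            funext j'
            have hrT : r.val + T ≤ t.val := by omega
            rw [(shared_vals hδ r hrT j').1]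
            show _ = (trajOfShared (X := X) (Y := Y) (U := U) t δ).2.1 r j'
            simp only [trajOfShared]
            rw [dif_pos hrT]
          · intro r hr
            funext j'
            have hrT : r.val + T ≤ t.val := by omega
            rw [(shared_vals hδ r hrT j').2]
            show _ = (trajOfShared (X := X) (Y := Y) (U := U) t δ).2.2 r j'
            simp only [trajOfShared]
            rw [dif_pos hrT]
        rw [e1, e2]
      · have hlt : ¬ s.val < t.val - T + 1 := by omega
        rw [if_neg hlt, dif_neg h]
    unfold probTrunc gFun
    rw [hind]
    ring
  · rw [if_neg hP, if_neg hP, mul_zero]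

lemma Pr_eq_SS (M : Model n K X Y U) (γ : Profile n T Y U) (x : X)
    (t : Fin n) (δ : SharedHist n T Y U t) :
    Pr M γ (fun ω => ω.1 (tauIdx T t) = x ∧ sharedOf T ω t = δ) = SS M γ x t δ n := by
  unfold Pr SS
  refine Finset.sum_congr rfl fun ω _ => ?_
  by_cases h : (ω.1 (tauIdx T t) = x ∧ sharedOf T ω t = δ)
  · rw [if_pos h, if_pos h, probTrunc_top]
  · rw [if_neg h, if_neg h]

lemma Pr_shared_split (M : Model n K X Y U) (γ : Profile n T Y U)
    (t : Fin n) (δ : SharedHist n T Y U t) :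
    Pr M γ (fun ω => sharedOf T ω t = δ)
      = ∑ x : X, Pr M γ (fun ω => ω.1 (tauIdx T t) = x ∧ sharedOf T ω t = δ) := by
  simp only [Pr]
  rw [Finset.sum_comm]
  refine Finset.sum_congr rfl fun ω _ => ?_
  by_cases h : sharedOf T ω t = δ
  · rw [if_pos h]
    simp [h]
  · simp [h]

end Aux7

/-- the centralized posterior does not depend on the strategy profile. -/
theorem centralized_posterior_independent_of_strategies
    (n T K : ℕ) [NeZero n] (hT1 : 1 ≤ T) (hTn : T ≤ n) (hK : 2 ≤ K)
    (X : Type) [Fintype X] [Nonempty X]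
    (Y U : Fin K → Type) [∀ j, Fintype (Y j)] [∀ j, Nonempty (Y j)]
    [∀ j, Fintype (U j)] [∀ j, Nonempty (U j)]
    (M : Model n K X Y U)
    (γ1 γ2 : Profile n T Y U)
    (t : Fin n) (hTt : T ≤ t.val)
    (δ : SharedHist n T Y U t)
    (h1 : 0 < Pr M γ1 (fun ω => sharedOf T ω t = δ))
    (h2 : 0 < Pr M γ2 (fun ω => sharedOf T ω t = δ)) :
    ∀ x : X, Theta M γ1 t δ x = Theta M γ2 t δ x := by
  intro x
  have hcard : (0:ℝ) < (Fintype.card (Vnew K X Y U) : ℝ) := by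
    exact_mod_cast Fintype.card_pos
  have hNpos : (0:ℝ) < (Fintype.card (Vnew K X Y U) : ℝ) ^ (n - (t.val - T + 1)) :=
    pow_pos hcard _
  have key : ∀ (γ : Profile n T Y U) (x' : X),
      (Fintype.card (Vnew K X Y U) : ℝ) ^ (n - (t.val - T + 1))
          * Pr M γ (fun ω => ω.1 (tauIdx T t) = x' ∧ sharedOf T ω t = δ)
        = cFac (X := X) γ t δ * FF M x' t δ := by
    intro γ x'
    rw [Pr_eq_SS M γ x' t δ, ← SS_telescope hT1 M γ x' t δ, SS_tau hT1 M γ x' t hTt δ]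
  have keyB : ∀ γ : Profile n T Y U,
      (Fintype.card (Vnew K X Y U) : ℝ) ^ (n - (t.val - T + 1))
          * Pr M γ (fun ω => sharedOf T ω t = δ)
        = cFac (X := X) γ t δ * ∑ x' : X, FF M x' t δ := by
    intro γ
    rw [Pr_shared_split M γ t δ, Finset.mul_sum, Finset.mul_sum]
    exact Finset.sum_congr rfl fun x' _ => key γ x'
  have hc : ∀ γ : Profile n T Y U, 0 < Pr M γ (fun ω => sharedOf T ω t = δ) →
      cFac (X := X) γ t δ ≠ 0 := by
    intro γ hγ h0
    have hk := keyB γ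
    rw [h0, zero_mul] at hk
    exact absurd hk (ne_of_gt (mul_pos hNpos hγ))
  have hTheta : ∀ γ : Profile n T Y U, 0 < Pr M γ (fun ω => sharedOf T ω t = δ) →
      Theta M γ t δ x = FF M x t δ / ∑ x' : X, FF M x' t δ := by
    intro γ hγ
    have hcγ := hc γ hγ
    show Pr M γ (fun ω => ω.1 (tauIdx T t) = x ∧ sharedOf T ω t = δ)
        / Pr M γ (fun ω => sharedOf T ω t = δ) = _
    rw [← mul_div_mul_left _ _ (ne_of_gt hNpos), key γ x, keyB γ,
      mul_div_mul_left _ _ hcγ]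
  rw [hTheta γ1 h1, hTheta γ2 h2]
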